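/- arXiv:2011.10436 — 2 statements merged into one kernel-verified Lean document; each statement's English description precedes it below -/
import Mathlib

section
/- Consensus is not locally solvable: let n = 2, so σ = {0,1}, and let ℓ, m ≥ 1. Let val assign to each simplex of χ^ℓ(σ) a nonempty subset of {0,1} such that val(τ′) ⊆ val(τ) whenever τ′ ⊆ τ, val({v}) is a singleton for every vertex v of χ^ℓ(σ), val assigns {0} to the unique vertex of the subcomplex χ^ℓ({0}), and val assigns {1} to the unique vertex of the subcomplex χ^ℓ({1}). Then there exists an edge (1-simplex) τ ∈ χ^ℓ(σ) with val(τ) = {0,1} such that every coloring c of χ^{ℓ+m}(σ) with values in {0,1} that is consistent and complete with val contains an edge of χ^m(τ) whose two vertices receive different values under c. -/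
open scoped Classical

/-- Vertices of the ℓ-th chromatic subdivision of the standard simplex on `Fin n`. -/
def ChromV (n : ℕ) : ℕ → Type
  | 0 => Fin n
  | ℓ + 1 => Fin n × Finset (ChromV n ℓ)

instance chromVDecEq (n : ℕ) : ∀ ℓ, DecidableEq (ChromV n ℓ)
  | 0 => inferInstanceAs (DecidableEq (Fin n))
  | ℓ + 1 =>
    letI := chromVDecEq n ℓ
    inferInstanceAs (DecidableEq (Fin n × Finset (ChromV n ℓ)))

/-- The color of a vertex of the ℓ-th chromatic subdivision. -/
def chromCol (n : ℕ) : ∀ ℓ, ChromV n ℓ → Fin n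
  | 0, v => v
  | _ + 1, v => v.1

/-- `ids γ`: the set of colors of the vertices of a simplex `γ`. -/
def ids {n ℓ : ℕ} (γ : Finset (ChromV n ℓ)) : Finset (Fin n) :=
  γ.image (chromCol n ℓ)

/-- One step of standard chromatic subdivision of a set of (nonempty) simplexes. -/
def subdiv {α : Type} {n : ℕ} (col : α → Fin n) (K : Set (Finset α)) :
    Set (Finset (Fin n × Finset α)) :=
  { s | s.Nonempty ∧
    (∀ v ∈ s, v.2 ∈ K ∧ v.1 ∈ v.2.image col) ∧
    (∀ u ∈ s, ∀ v ∈ s, u ≠ v → u.1 ≠ v.1) ∧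
    (∀ u ∈ s, ∀ v ∈ s, u.2 ⊆ v.2 ∨ v.2 ⊆ u.2) ∧
    (∀ u ∈ s, ∀ v ∈ s, u.1 ∈ v.2.image col → u.2 ⊆ v.2) }

/-- The faces of a simplex `τ`: its nonempty subsets. -/
def facesOf {α : Type} (τ : Finset α) : Set (Finset α) :=
  { s | s.Nonempty ∧ s ⊆ τ }

/-- The ℓ-th chromatic subdivision `χ^ℓ(ρ)` of a face `ρ` of σ,
as a subcomplex of `χ^ℓ(σ)`. -/
def chromSub (n : ℕ) (ρ : Finset (Fin n)) : ∀ ℓ, Set (Finset (ChromV n ℓ))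
  | 0 => facesOf ρ
  | ℓ + 1 => subdiv (chromCol n ℓ) (chromSub n ρ ℓ)

/-- Iterated chromatic subdivision of a subcomplex sitting at level ℓ. -/
def iterSub (n ℓ : ℕ) : ∀ m, Set (Finset (ChromV n ℓ)) → Set (Finset (ChromV n (ℓ + m)))
  | 0, K => K
  | m + 1, K => subdiv (chromCol n (ℓ + m)) (iterSub n ℓ m K)

/-- `χ^m(τ)` for a simplex `τ ∈ χ^ℓ(σ)`: the subcomplex of `χ^{ℓ+m}(σ)` obtained by
iterated subdivision of `τ` and its faces. -/
def subOf {n ℓ : ℕ} (m : ℕ) (τ : Finset (ChromV n ℓ)) : Set (Finset (ChromV n (ℓ + m))) :=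
  iterSub n ℓ m (facesOf τ)

/-- The vertices of a subcomplex. -/
def vertexSet {n ℓ : ℕ} (L : Set (Finset (ChromV n ℓ))) : Set (ChromV n ℓ) :=
  { v | ∃ s ∈ L, v ∈ s }

/-- `c(L)`: the set of values taken by a coloring `c` on the vertices of a subcomplex `L`. -/
def colorSet {n ℓ : ℕ} {β : Type} (c : ChromV n ℓ → β) (L : Set (Finset (ChromV n ℓ))) :
    Set β :=
  c '' vertexSet L

/-- The carrier of a simplex `γ ∈ χ^ℓ(σ)`: the smallest face `ρ` of σ with `γ ∈ χ^ℓ(ρ)`,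
realized as the intersection of all such faces. -/
noncomputable def carr {n ℓ : ℕ} (γ : Finset (ChromV n ℓ)) : Finset (Fin n) :=
  Finset.univ.filter fun i => ∀ ρ : Finset (Fin n), γ ∈ chromSub n ρ ℓ → i ∈ ρ

/-- The set agreement valency map: `val(τ) = ids(τ)` if `|τ| ≤ n-2`, else `carr(τ)`. -/
noncomputable def saVal {n ℓ : ℕ} (τ : Finset (ChromV n ℓ)) : Finset (Fin n) :=
  if τ.card ≤ n - 2 then ids τ else carr τ

/-- The weak symmetry breaking valency map: `{1}` on simplexes of dimension ≤ n-3,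
`{0,1}` otherwise. -/
def wsbVal {n ℓ : ℕ} (τ : Finset (ChromV n ℓ)) : Set (Fin 2) :=
  if τ.card ≤ n - 2 then {1} else Set.univ

/-- The simplicial map on the ℓ-th chromatic subdivision induced functorially by a
map `f` on the colors/vertices of σ. -/
def vmap (n : ℕ) (f : Fin n → Fin n) : ∀ ℓ, ChromV n ℓ → ChromV n ℓ
  | 0, v => f v
  | ℓ + 1, v => (f v.1, v.2.image (vmap n f ℓ))

/-- The order-preserving bijection between two faces `s` and `t` of σ of the same
cardinality (extended by the identity elsewhere). -/
noncomputable def opBij {n : ℕ} (s t : Finset (Fin n)) (i : Fin n) : Fin n :=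
  if h : i ∈ s ∧ s.card = t.card then
    ↑(t.orderIsoOfFin rfl (Fin.cast h.2 ((s.orderIsoOfFin rfl).symm ⟨i, h.1⟩)))
  else i

/-- A coloring of `χ^L(σ)` is symmetric if it is invariant under the order-preserving
simplicial bijections between subdivided faces of σ of the same dimension. -/
def SymmColoring {n L : ℕ} {β : Type} (b : ChromV n L → β) : Prop :=
  ∀ s t : Finset (Fin n), s.Nonempty → t.Nonempty → s ≠ t → s.card = t.card →
    ∀ v ∈ vertexSet (chromSub n s L), b (vmap n (opBij s t) L v) = b v

/-- Transport of vertices along an equality of levels. -/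
def castV (n : ℕ) {a b : ℕ} (h : a = b) : ChromV n a → ChromV n b :=
  fun v => h ▸ v

namespace CNLS

open Finset

set_option linter.unusedSectionVars false

set_option linter.unusedVariables false

variable {α : Type} {n : ℕ} [DecidableEq α]

/-- Vertices of a set of simplexes. -/
def vset (K : Set (Finset α)) : Set α := {v | ∃ s ∈ K, v ∈ s}

/-- Downward closure under nonempty subsets. -/
def Hered (K : Set (Finset α)) : Prop :=
  ∀ s ∈ K, ∀ t : Finset α, t.Nonempty → t ⊆ s → t ∈ K

/-- All simplexes have pairwise distinctly colored vertices. -/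
def ChromOK (col : α → Fin n) (K : Set (Finset α)) : Prop :=
  ∀ s ∈ K, ∀ u ∈ s, ∀ v ∈ s, u ≠ v → col u ≠ col v

/-- Edge relation of a complex. -/
def ERel (K : Set (Finset α)) (u v : α) : Prop := u ≠ v ∧ ({u, v} : Finset α) ∈ K

/-- Connectivity of a complex. -/
def Conn (K : Set (Finset α)) : Prop :=
  ∀ u ∈ vset K, ∀ v ∈ vset K, Relation.ReflTransGen (ERel K) u v

lemma erel_symm {K : Set (Finset α)} : Symmetric (ERel K) := by
  rintro u v ⟨h1, h2⟩
  exact ⟨h1.symm, by rwa [Finset.pair_comm]⟩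

lemma rtg_symm {K : Set (Finset α)} {u v : α}
    (h : Relation.ReflTransGen (ERel K) u v) :
    Relation.ReflTransGen (ERel K) v u :=
  (@Relation.ReflTransGen.symmetric _ _ ⟨erel_symm⟩).symm _ _ h

lemma exists_bichrom_edge {K : Set (Finset α)} {β : Type*} {c : α → β} {x y : α}
    (h : Relation.ReflTransGen (ERel K) x y) (hxy : c x ≠ c y) :
    ∃ p q, p ≠ q ∧ ({p, q} : Finset α) ∈ K ∧ c p ≠ c q := by
  induction h with
  | refl => exact absurd rfl hxy
  | @tail b d h1 h2 ih =>
    by_cases hbd : c b = c d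
    · exact ih (fun hxb => hxy (hxb.trans hbd))
    · exact ⟨b, d, h2.1, h2.2, hbd⟩

lemma hered_subdiv (col : α → Fin n) (K : Set (Finset α)) : Hered (subdiv col K) := by
  rintro s ⟨-, h1, h2, h3, h4⟩ t ht hts
  exact ⟨ht, fun v hv => h1 v (hts hv), fun u hu v hv => h2 u (hts hu) v (hts hv),
    fun u hu v hv => h3 u (hts hu) v (hts hv), fun u hu v hv => h4 u (hts hu) v (hts hv)⟩

lemma chromOK_subdiv (col : α → Fin n) (K : Set (Finset α)) :
    ChromOK Prod.fst (subdiv col K) := by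
  rintro s ⟨-, -, h2, -, -⟩ u hu v hv huv
  exact h2 u hu v hv huv

lemma singleton_mem_subdiv {col : α → Fin n} {K : Set (Finset α)} {τ : Finset α} {i : Fin n}
    (hτ : τ ∈ K) (hi : i ∈ τ.image col) :
    ({(i, τ)} : Finset (Fin n × Finset α)) ∈ subdiv col K := by
  refine ⟨⟨_, Finset.mem_singleton_self _⟩, ?_, ?_, ?_, ?_⟩ <;>
    · intros v hv
      simp only [Finset.mem_singleton] at hv
      subst hv
      first
        | exact ⟨hτ, hi⟩
        | (intros w hw
           simp only [Finset.mem_singleton] at hw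
           subst hw
           simp_all)

lemma mem_vset_subdiv {col : α → Fin n} {K : Set (Finset α)} {v : Fin n × Finset α} :
    v ∈ vset (subdiv col K) ↔ v.2 ∈ K ∧ v.1 ∈ v.2.image col := by
  constructor
  · rintro ⟨s, ⟨-, h1, -⟩, hv⟩
    exact h1 v hv
  · rintro ⟨h1, h2⟩
    exact ⟨{v}, singleton_mem_subdiv h1 h2, Finset.mem_singleton_self _⟩

lemma edge_same_mem_subdiv {col : α → Fin n} {K : Set (Finset α)} {τ : Finset α} {i j : Fin n}
    (hτ : τ ∈ K) (hi : i ∈ τ.image col) (hj : j ∈ τ.image col) (hij : i ≠ j) :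
    ({(i, τ), (j, τ)} : Finset (Fin n × Finset α)) ∈ subdiv col K := by
  refine ⟨⟨_, Finset.mem_insert_self _ _⟩, ?_, ?_, ?_, ?_⟩ <;>
    · intro u hu
      simp only [Finset.mem_insert, Finset.mem_singleton] at hu
      first
        | (rcases hu with hu | hu <;> subst hu <;> exact ⟨hτ, by assumption⟩)
        | (intro v hv
           simp only [Finset.mem_insert, Finset.mem_singleton] at hv
           rcases hu with hu | hu <;> rcases hv with hv | hv <;> subst hu <;> subst hv <;>
             simp_all [Finset.Subset.refl])

lemma edge_anchor_mem_subdiv {col : α → Fin n} {K : Set (Finset α)} {τ : Finset α}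
    {w : α} {j : Fin n} (hh : Hered K) (hτ : τ ∈ K) (hw : w ∈ τ)
    (hj : j ∈ τ.image col) (hij : col w ≠ j) :
    ({(col w, ({w} : Finset α)), (j, τ)} : Finset (Fin n × Finset α)) ∈ subdiv col K := by
  have hwK : ({w} : Finset α) ∈ K :=
    hh τ hτ {w} ⟨w, Finset.mem_singleton_self _⟩ (Finset.singleton_subset_iff.2 hw)
  have hcw : col w ∈ ({w} : Finset α).image col := Finset.mem_image_of_mem _ (Finset.mem_singleton_self _)
  refine ⟨⟨_, Finset.mem_insert_self _ _⟩, ?_, ?_, ?_, ?_⟩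
  · intro u hu
    simp only [Finset.mem_insert, Finset.mem_singleton] at hu
    rcases hu with hu | hu <;> subst hu
    · exact ⟨hwK, hcw⟩
    · exact ⟨hτ, hj⟩
  · intro u hu v hv huv
    simp only [Finset.mem_insert, Finset.mem_singleton] at hu hv
    rcases hu with hu | hu <;> rcases hv with hv | hv <;> subst hu <;> subst hv
    · exact absurd rfl huv
    · exact hij
    · exact fun h => hij h.symm
    · exact absurd rfl huv
  · intro u hu v hv
    simp only [Finset.mem_insert, Finset.mem_singleton] at hu hv
    rcases hu with hu | hu <;> rcases hv with hv | hv <;> subst hu <;> subst hv <;>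
      simp_all [Finset.singleton_subset_iff.2 hw]
  · intro u hu v hv hjv
    simp only [Finset.mem_insert, Finset.mem_singleton] at hu hv
    rcases hu with hu | hu <;> rcases hv with hv | hv <;> subst hu <;> subst hv
    · rfl
    · exact Finset.singleton_subset_iff.2 hw
    · simp only [Finset.image_singleton, Finset.mem_singleton] at hjv
      exact absurd hjv.symm hij
    · rfl

lemma conn_subdiv {col : α → Fin n} {K : Set (Finset α)}
    (hh : Hered K) (hc : ChromOK col K) (hconn : Conn K) :
    Conn (subdiv col K) := by
  set S := subdiv col K with hS
  -- Claim 1: every vertex of S is reachable from an anchor vertex (col w, {w}).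
  have reach : ∀ v ∈ vset S, ∃ w ∈ v.2,
      col w = v.1 ∧ Relation.ReflTransGen (ERel S) (col w, ({w} : Finset α)) v := by
    intro v hv
    obtain ⟨hvK, hvi⟩ := mem_vset_subdiv.1 hv
    obtain ⟨w, hwτ, hcw⟩ := Finset.mem_image.1 hvi
    refine ⟨w, hwτ, hcw, ?_⟩
    by_cases hall : ∀ j ∈ v.2.image col, j = v.1
    · have hv2 : v.2 = {w} := by
        apply Finset.eq_singleton_iff_unique_mem.2
        refine ⟨hwτ, fun x hx => ?_⟩
        by_contra hxw
        exact (hc v.2 hvK x hx w hwτ hxw)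
          ((hall _ (Finset.mem_image_of_mem _ hx)).trans hcw.symm)
      have : v = (col w, ({w} : Finset α)) := by
        rw [Prod.ext_iff]; exact ⟨hcw.symm, hv2⟩
      rw [this]
    · push_neg at hall
      obtain ⟨j, hjmem, hji⟩ := hall
      have hcwj : col w ≠ j := fun h => hji (hcw ▸ h.symm)
      have e1 : ERel S (col w, ({w} : Finset α)) (j, v.2) := by
        refine ⟨fun h => hcwj (congrArg Prod.fst h), ?_⟩
        exact edge_anchor_mem_subdiv hh hvK hwτ hjmem hcwj
      have e2 : ERel S (j, v.2) (v.1, v.2) := by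
        refine ⟨fun h => hji (congrArg Prod.fst h), ?_⟩
        exact edge_same_mem_subdiv hvK hjmem hvi hji
      have : v = (v.1, v.2) := rfl
      rw [this]
      exact (Relation.ReflTransGen.single e1).tail e2
  -- Claim 2: anchors of K-connected vertices are S-connected.
  have anchor_conn : ∀ w w' : α, Relation.ReflTransGen (ERel K) w w' →
      Relation.ReflTransGen (ERel S) (col w, ({w} : Finset α)) (col w', ({w'} : Finset α)) := by
    intro w w' h
    induction h with
    | refl => exact Relation.ReflTransGen.refl
    | @tail b d h1 h2 ih =>
      refine ih.trans ?_
      obtain ⟨hbd, he⟩ := h2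
      have hbE : b ∈ ({b, d} : Finset α) := Finset.mem_insert_self _ _
      have hdE : d ∈ ({b, d} : Finset α) := Finset.mem_insert_of_mem (Finset.mem_singleton_self _)
      have hcbd : col b ≠ col d := hc _ he b hbE d hdE hbd
      have e1 : ERel S (col b, ({b} : Finset α)) (col d, ({b, d} : Finset α)) := by
        refine ⟨fun h => hcbd (congrArg Prod.fst h), ?_⟩
        exact edge_anchor_mem_subdiv hh he hbE (Finset.mem_image_of_mem _ hdE) hcbd
      have e2 : ERel S (col d, ({b, d} : Finset α)) (col b, ({b, d} : Finset α)) := by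
        refine ⟨fun h => hcbd (congrArg Prod.fst h).symm, ?_⟩
        exact edge_same_mem_subdiv he (Finset.mem_image_of_mem _ hdE)
          (Finset.mem_image_of_mem _ hbE) hcbd.symm
      have e3 : ERel S (col b, ({b, d} : Finset α)) (col d, ({d} : Finset α)) := by
        refine ⟨fun h => hcbd (congrArg Prod.fst h), ?_⟩
        have := edge_anchor_mem_subdiv (col := col) hh he hdE
          (Finset.mem_image_of_mem _ hbE) hcbd.symm
        rwa [Finset.pair_comm] at this
      exact ((Relation.ReflTransGen.single e1).tail e2).tail e3
  intro u hu v hv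
  obtain ⟨wu, hwu, hcu, hru⟩ := reach u hu
  obtain ⟨wv, hwv, hcv, hrv⟩ := reach v hv
  have hwuK : wu ∈ vset K := ⟨u.2, (mem_vset_subdiv.1 hu).1, hwu⟩
  have hwvK : wv ∈ vset K := ⟨v.2, (mem_vset_subdiv.1 hv).1, hwv⟩
  exact (rtg_symm hru).trans ((anchor_conn wu wv (hconn wu hwuK wv hwvK)).trans hrv)

lemma subdiv_mono {col : α → Fin n} {K K' : Set (Finset α)} (h : K ⊆ K') :
    subdiv col K ⊆ subdiv col K' := by
  rintro s ⟨h0, h1, h2, h3, h4⟩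
  exact ⟨h0, fun v hv => ⟨h (h1 v hv).1, (h1 v hv).2⟩, h2, h3, h4⟩

lemma hered_facesOf (τ : Finset α) : Hered (facesOf τ) :=
  fun s hs t ht hts => ⟨ht, hts.trans hs.2⟩

lemma hered_chromSub (n : ℕ) (ρ : Finset (Fin n)) : ∀ ℓ, Hered (chromSub n ρ ℓ)
  | 0 => hered_facesOf ρ
  | ℓ + 1 => hered_subdiv (chromCol n ℓ) (chromSub n ρ ℓ)

lemma chromOK_chromSub (n : ℕ) (ρ : Finset (Fin n)) :
    ∀ ℓ, ChromOK (chromCol n ℓ) (chromSub n ρ ℓ)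
  | 0 => fun _ _ _ _ _ _ huv => huv
  | ℓ + 1 => chromOK_subdiv (chromCol n ℓ) (chromSub n ρ ℓ)

lemma chromSub_mono (n : ℕ) {ρ ρ' : Finset (Fin n)} (h : ρ ⊆ ρ') :
    ∀ ℓ, chromSub n ρ ℓ ⊆ chromSub n ρ' ℓ
  | 0 => fun s hs => ⟨hs.1, hs.2.trans h⟩
  | ℓ + 1 => subdiv_mono (chromSub_mono n h ℓ)

lemma conn_chromSub_univ (n : ℕ) : ∀ ℓ, Conn (chromSub n Finset.univ ℓ)
  | 0 => by
    intro u hu v hv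
    by_cases huv : u = v
    · subst huv; exact Relation.ReflTransGen.refl
    · exact Relation.ReflTransGen.single
        ⟨huv, ⟨⟨u, Finset.mem_insert_self _ _⟩, fun x _ => Finset.mem_univ (α := Fin n) x⟩⟩
  | ℓ + 1 => conn_subdiv (hered_chromSub n _ ℓ) (chromOK_chromSub n _ ℓ) (conn_chromSub_univ n ℓ)

lemma exists_vertex (n : ℕ) {ρ : Finset (Fin n)} (hρ : ρ.Nonempty) :
    ∀ ℓ, (vset (chromSub n ρ ℓ)).Nonempty
  | 0 => ⟨hρ.choose, ρ, ⟨hρ, Finset.Subset.refl ρ⟩, hρ.choose_spec⟩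
  | ℓ + 1 => by
    obtain ⟨v, s, hs, hvs⟩ := exists_vertex n hρ ℓ
    have h1 : ({v} : Finset (ChromV n ℓ)) ∈ chromSub n ρ ℓ :=
      hered_chromSub n ρ ℓ s hs {v} ⟨v, Finset.mem_singleton_self v⟩
        (Finset.singleton_subset_iff.2 hvs)
    exact ⟨(chromCol n ℓ v, {v}), mem_vset_subdiv.2
      ⟨h1, Finset.mem_image_of_mem _ (Finset.mem_singleton_self v)⟩⟩

lemma hered_iterSub (n ℓ : ℕ) {K : Set (Finset (ChromV n ℓ))} (hh : Hered K) :
    ∀ m, Hered (iterSub n ℓ m K)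
  | 0 => hh
  | m + 1 => hered_subdiv _ _

lemma chromOK_iterSub (n ℓ : ℕ) {K : Set (Finset (ChromV n ℓ))}
    (hc : ChromOK (chromCol n ℓ) K) :
    ∀ m, ChromOK (chromCol n (ℓ + m)) (iterSub n ℓ m K)
  | 0 => hc
  | m + 1 => chromOK_subdiv _ _

lemma conn_iterSub (n ℓ : ℕ) {K : Set (Finset (ChromV n ℓ))}
    (hh : Hered K) (hc : ChromOK (chromCol n ℓ) K) (hconn : Conn K) :
    ∀ m, Conn (iterSub n ℓ m K)
  | 0 => hconn
  | m + 1 => conn_subdiv (hered_iterSub n ℓ hh m) (chromOK_iterSub n ℓ hc m)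
      (conn_iterSub n ℓ hh hc hconn m)

lemma chromOK_facesOf_pair {col : α → Fin n} {p q : α} (h : col p ≠ col q) :
    ChromOK col (facesOf ({p, q} : Finset α)) := by
  intro s hs u hu v hv huv
  have hu' := hs.2 hu
  have hv' := hs.2 hv
  simp only [Finset.mem_insert, Finset.mem_singleton] at hu' hv'
  rcases hu' with rfl | rfl <;> rcases hv' with rfl | rfl <;>
    first | exact absurd rfl huv | exact h | exact h.symm

lemma conn_facesOf_pair (p q : α) : Conn (facesOf ({p, q} : Finset α)) := by
  intro u hu v hv
  obtain ⟨s, hs, hus⟩ := hu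
  obtain ⟨t, ht, hvt⟩ := hv
  have hu' := hs.2 hus
  have hv' := ht.2 hvt
  by_cases huv : u = v
  · subst huv; exact Relation.ReflTransGen.refl
  · refine Relation.ReflTransGen.single ⟨huv, ⟨⟨u, Finset.mem_insert_self _ _⟩, ?_⟩⟩
    intro x hx
    simp only [Finset.mem_insert, Finset.mem_singleton] at hx
    rcases hx with rfl | rfl
    · exact hu'
    · exact hv'

end CNLS

/-- Consensus is not locally solvable (n = 2). -/
theorem consensus_not_locally_solvable
    (ℓ m : ℕ) (hℓ : 1 ≤ ℓ) (hm : 1 ≤ m)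
    (val : Finset (ChromV 2 ℓ) → Set (Fin 2))
    (hne : ∀ τ ∈ chromSub 2 Finset.univ ℓ, (val τ).Nonempty)
    (hmono : ∀ τ' ∈ chromSub 2 Finset.univ ℓ, ∀ τ ∈ chromSub 2 Finset.univ ℓ,
      τ' ⊆ τ → val τ' ⊆ val τ)
    (hsingle : ∀ v ∈ vertexSet (chromSub 2 Finset.univ ℓ), ∃ x, val {v} = {x})
    (h0 : ∀ v ∈ vertexSet (chromSub 2 ({0} : Finset (Fin 2)) ℓ), val {v} = {0})
    (h1 : ∀ v ∈ vertexSet (chromSub 2 ({1} : Finset (Fin 2)) ℓ), val {v} = {1}) :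
    ∃ τ ∈ chromSub 2 Finset.univ ℓ, τ.card = 2 ∧ val τ = {0, 1} ∧
      ∀ c : ChromV 2 (ℓ + m) → Fin 2,
        (∀ τ' ∈ chromSub 2 Finset.univ ℓ, colorSet c (subOf m τ') ⊆ val τ') →
        (∀ τ' ∈ chromSub 2 Finset.univ ℓ, colorSet c (subOf m τ') = val τ') →
        ∃ s ∈ subOf m τ, s.card = 2 ∧ ∃ u ∈ s, ∃ v ∈ s, c u ≠ c v := by
  classical
  have hFin : ∀ x : Fin 2, x = 0 ∨ x = 1 := by decide
  have hK_hered := CNLS.hered_chromSub 2 Finset.univ ℓ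
  have hK_chrom := CNLS.chromOK_chromSub 2 Finset.univ ℓ
  have hK_conn := CNLS.conn_chromSub_univ 2 ℓ
  obtain ⟨u0, hu0⟩ := CNLS.exists_vertex 2 (ρ := {0}) ⟨0, Finset.mem_singleton_self 0⟩ ℓ
  obtain ⟨u1, hu1⟩ := CNLS.exists_vertex 2 (ρ := {1}) ⟨1, Finset.mem_singleton_self 1⟩ ℓ
  have hu0K : u0 ∈ CNLS.vset (chromSub 2 Finset.univ ℓ) := by
    obtain ⟨s, hs, h⟩ := hu0
    exact ⟨s, CNLS.chromSub_mono 2 (Finset.subset_univ _) ℓ hs, h⟩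
  have hu1K : u1 ∈ CNLS.vset (chromSub 2 Finset.univ ℓ) := by
    obtain ⟨s, hs, h⟩ := hu1
    exact ⟨s, CNLS.chromSub_mono 2 (Finset.subset_univ _) ℓ hs, h⟩
  set f : ChromV 2 ℓ → Fin 2 := fun v =>
    if h : v ∈ vertexSet (chromSub 2 Finset.univ ℓ) then (hsingle v h).choose else 0 with hfdef
  have hf : ∀ v ∈ CNLS.vset (chromSub 2 Finset.univ ℓ), val {v} = {f v} := by
    intro v hv
    have hv' : v ∈ vertexSet (chromSub 2 Finset.univ ℓ) := hv
    simp only [hfdef, dif_pos hv']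
    exact (hsingle v hv').choose_spec
  have key : ∀ (v : ChromV 2 ℓ) (x : Fin 2),
      v ∈ CNLS.vset (chromSub 2 Finset.univ ℓ) → val {v} = {x} → f v = x := by
    intro v x hv hval
    exact Set.singleton_eq_singleton_iff.1 ((hf v hv).symm.trans hval)
  have hf0 : f u0 = 0 := key u0 0 hu0K (h0 u0 hu0)
  have hf1 : f u1 = 1 := key u1 1 hu1K (h1 u1 hu1)
  obtain ⟨p, q, hpq, hedge, hfpq⟩ := CNLS.exists_bichrom_edge (c := f)
    (hK_conn u0 hu0K u1 hu1K)
    (by rw [hf0, hf1]; exact (by decide : (0 : Fin 2) ≠ 1))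
  have hpV : p ∈ CNLS.vset (chromSub 2 Finset.univ ℓ) :=
    ⟨{p, q}, hedge, Finset.mem_insert_self _ _⟩
  have hqV : q ∈ CNLS.vset (chromSub 2 Finset.univ ℓ) :=
    ⟨{p, q}, hedge, Finset.mem_insert_of_mem (Finset.mem_singleton_self _)⟩
  have hpS : ({p} : Finset (ChromV 2 ℓ)) ∈ chromSub 2 Finset.univ ℓ :=
    hK_hered _ hedge {p} ⟨p, Finset.mem_singleton_self _⟩
      (Finset.singleton_subset_iff.2 (Finset.mem_insert_self _ _))
  have hqS : ({q} : Finset (ChromV 2 ℓ)) ∈ chromSub 2 Finset.univ ℓ :=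
    hK_hered _ hedge {q} ⟨q, Finset.mem_singleton_self _⟩
      (Finset.singleton_subset_iff.2 (Finset.mem_insert_of_mem (Finset.mem_singleton_self _)))
  have hfpmem : f p ∈ val {p, q} := by
    apply hmono {p} hpS {p, q} hedge
      (Finset.singleton_subset_iff.2 (Finset.mem_insert_self _ _))
    rw [hf p hpV]; exact rfl
  have hfqmem : f q ∈ val {p, q} := by
    apply hmono {q} hqS {p, q} hedge
      (Finset.singleton_subset_iff.2 (Finset.mem_insert_of_mem (Finset.mem_singleton_self _)))
    rw [hf q hqV]; exact rfl
  have h0mem : (0 : Fin 2) ∈ val {p, q} ∧ (1 : Fin 2) ∈ val {p, q} := by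
    rcases hFin (f p) with h | h <;> rcases hFin (f q) with h' | h'
    · exact absurd (h.trans h'.symm) hfpq
    · exact ⟨h ▸ hfpmem, h' ▸ hfqmem⟩
    · exact ⟨h' ▸ hfqmem, h ▸ hfpmem⟩
    · exact absurd (h.trans h'.symm) hfpq
  have h01 : val ({p, q} : Finset (ChromV 2 ℓ)) = {0, 1} := by
    ext x
    constructor
    · intro _
      rcases hFin x with h | h <;> subst h <;> simp
    · intro hx
      rcases hx with hx | hx
      · subst hx; exact h0mem.1
      · rw [Set.mem_singleton_iff] at hx; subst hx; exact h0mem.2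
  refine ⟨{p, q}, hedge, Finset.card_pair hpq, h01, ?_⟩
  intro c hcons hcomp
  have hcc := hcomp {p, q} hedge
  rw [h01] at hcc
  have h0c : (0 : Fin 2) ∈ colorSet c (subOf m ({p, q} : Finset (ChromV 2 ℓ))) := by
    rw [hcc]; exact Set.mem_insert _ _
  have h1c : (1 : Fin 2) ∈ colorSet c (subOf m ({p, q} : Finset (ChromV 2 ℓ))) := by
    rw [hcc]; exact Set.mem_insert_of_mem _ rfl
  obtain ⟨x0, hx0, hcx0⟩ := h0c
  obtain ⟨x1, hx1, hcx1⟩ := h1c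
  have hcolpq : chromCol 2 ℓ p ≠ chromCol 2 ℓ q :=
    hK_chrom {p, q} hedge p (Finset.mem_insert_self _ _) q
      (Finset.mem_insert_of_mem (Finset.mem_singleton_self _)) hpq
  have hconn2 : CNLS.Conn (subOf m ({p, q} : Finset (ChromV 2 ℓ))) :=
    CNLS.conn_iterSub 2 ℓ (CNLS.hered_facesOf _)
      (CNLS.chromOK_facesOf_pair hcolpq) (CNLS.conn_facesOf_pair p q) m
  have chain := hconn2 x0 hx0 x1 hx1
  obtain ⟨a, b, hab, hE, hcab⟩ := CNLS.exists_bichrom_edge (c := c) chain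
    (by rw [hcx0, hcx1]; exact (by decide : (0 : Fin 2) ≠ 1))
  exact ⟨{a, b}, hE, Finset.card_pair hab, a, Finset.mem_insert_self _ _, b,
    Finset.mem_insert_of_mem (Finset.mem_singleton_self _), hcab⟩
end

section
/- There is no local valency impossibility proof for (n−1)-set agreement: let n ≥ 3 and R ≥ 2, and for each ℓ ∈ {1,…,R−1} let val^ℓ denote the set agreement valency map on χ^ℓ(σ). For every sequence σ = σ₀, σ₁, …, σ_{R−1} in which σ_ℓ is an (n−1)-simplex of χ(σ_{ℓ−1}) for each ℓ ∈ {1,…,R−1} (so σ_ℓ ∈ χ^ℓ(σ)), there exists a coloring c of χ^R(σ) with values in {0,…,n−1} such that: c is consistent and complete with val^{R−1}; c(χ^{R−ℓ}(τ)) ⊆ val^ℓ(τ) for every ℓ ∈ {1,…,R−1} and every simplex τ ∈ χ^ℓ(σ); and no simplex of χ(σ_{R−1}) receives n distinct values under c. -/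
open scoped Classical

section Helpers

variable {n : ℕ}

lemma mem_subdiv_closed {α : Type} {col : α → Fin n} {K : Set (Finset α)}
    {s t : Finset (Fin n × Finset α)} (hs : s ∈ subdiv col K) (hts : t ⊆ s)
    (hne : t.Nonempty) : t ∈ subdiv col K := by
  obtain ⟨h1, h2, h3, h4, h5⟩ := hs
  exact ⟨hne, fun v hv => h2 v (hts hv), fun u hu v hv => h3 u (hts hu) v (hts hv),
    fun u hu v hv => h4 u (hts hu) v (hts hv), fun u hu v hv => h5 u (hts hu) v (hts hv)⟩

lemma subdiv_mono {α : Type} {col : α → Fin n} {K K' : Set (Finset α)} (h : K ⊆ K') :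
    subdiv col K ⊆ subdiv col K' := by
  rintro s ⟨h1, h2, h3, h4, h5⟩
  exact ⟨h1, fun v hv => ⟨h (h2 v hv).1, (h2 v hv).2⟩, h3, h4, h5⟩

lemma chromSub_closed : ∀ {ℓ : ℕ} {ρ : Finset (Fin n)} {γ γ' : Finset (ChromV n ℓ)},
    γ ∈ chromSub n ρ ℓ → γ' ⊆ γ → γ'.Nonempty → γ' ∈ chromSub n ρ ℓ
  | 0, ρ, γ, γ', h, hsub, hne => ⟨hne, hsub.trans h.2⟩
  | ℓ+1, ρ, γ, γ', h, hsub, hne => mem_subdiv_closed h hsub hne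

lemma iterSub_mono (ℓ : ℕ) : ∀ (m : ℕ) {K K' : Set (Finset (ChromV n ℓ))}, K ⊆ K' →
    iterSub n ℓ m K ⊆ iterSub n ℓ m K'
  | 0, K, K', h => h
  | m+1, K, K', h => subdiv_mono (iterSub_mono ℓ m h)

lemma iterSub_chromSub (ρ : Finset (Fin n)) (ℓ : ℕ) : ∀ m : ℕ,
    iterSub n ℓ m (chromSub n ρ ℓ) = chromSub n ρ (ℓ + m)
  | 0 => rfl
  | m+1 => by
      show subdiv (chromCol n (ℓ + m)) (iterSub n ℓ m (chromSub n ρ ℓ))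
        = subdiv (chromCol n (ℓ + m)) (chromSub n ρ (ℓ + m))
      rw [iterSub_chromSub ρ ℓ m]

lemma facesOf_subset_chromSub {ℓ : ℕ} {ρ : Finset (Fin n)} {τ : Finset (ChromV n ℓ)}
    (h : τ ∈ chromSub n ρ ℓ) : facesOf τ ⊆ chromSub n ρ ℓ :=
  fun _s hs => chromSub_closed h hs.2 hs.1

lemma subOf_subset_chromSub {ℓ m : ℕ} {ρ : Finset (Fin n)} {τ : Finset (ChromV n ℓ)}
    (h : τ ∈ chromSub n ρ ℓ) : subOf m τ ⊆ chromSub n ρ (ℓ + m) := by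
  rw [show chromSub n ρ (ℓ + m) = iterSub n ℓ m (chromSub n ρ ℓ) from
    (iterSub_chromSub ρ ℓ m).symm]
  exact iterSub_mono ℓ m (facesOf_subset_chromSub h)

lemma ids_subset_of_mem_chromSub : ∀ {ℓ : ℕ} {ρ : Finset (Fin n)} {γ : Finset (ChromV n ℓ)},
    γ ∈ chromSub n ρ ℓ → ids γ ⊆ ρ
  | 0, ρ, γ, h => by
      intro i hi
      simp only [ids, Finset.mem_image] at hi
      obtain ⟨v, hv, rfl⟩ := hi
      exact h.2 hv
  | ℓ+1, ρ, γ, h => by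
      intro i hi
      simp only [ids, Finset.mem_image] at hi
      obtain ⟨v, hv, rfl⟩ := hi
      exact ids_subset_of_mem_chromSub (h.2.1 v hv).1 (h.2.1 v hv).2

lemma ids_mono {ℓ : ℕ} {γ γ' : Finset (ChromV n ℓ)} (h : γ' ⊆ γ) : ids γ' ⊆ ids γ :=
  Finset.image_subset_image h

lemma ids_subset_of_mem_iterSub {ℓ : ℕ} {τ : Finset (ChromV n ℓ)} :
    ∀ {m : ℕ} {γ : Finset (ChromV n (ℓ + m))}, γ ∈ iterSub n ℓ m (facesOf τ) →
      ids γ ⊆ ids τ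
  | 0, γ, h => ids_mono h.2
  | m+1, γ, h => by
      intro i hi
      simp only [ids, Finset.mem_image] at hi
      obtain ⟨v, hv, rfl⟩ := hi
      exact ids_subset_of_mem_iterSub (h.2.1 v hv).1 (h.2.1 v hv).2

lemma card_ids : ∀ {ℓ : ℕ} {ρ : Finset (Fin n)} {γ : Finset (ChromV n ℓ)},
    γ ∈ chromSub n ρ ℓ → (ids γ).card = γ.card
  | 0, ρ, γ, _h => Finset.card_image_of_injective γ (fun a b h => h)
  | ℓ+1, ρ, γ, h => Finset.card_image_of_injOn (fun u hu v hv huv => by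
      by_contra hne
      exact h.2.2.1 u hu v hv hne huv)

lemma mem_carr {ℓ : ℕ} {γ : Finset (ChromV n ℓ)} {i : Fin n} :
    i ∈ carr γ ↔ ∀ ρ : Finset (Fin n), γ ∈ chromSub n ρ ℓ → i ∈ ρ := by
  simp [carr]

lemma ids_subset_carr {ℓ : ℕ} {γ : Finset (ChromV n ℓ)} : ids γ ⊆ carr γ :=
  fun _i hi => mem_carr.2 fun _ρ hρ => ids_subset_of_mem_chromSub hρ hi

lemma carr_mono {ℓ : ℕ} {γ γ' : Finset (ChromV n ℓ)} (h : γ' ⊆ γ) (hne : γ'.Nonempty) :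
    carr γ' ⊆ carr γ :=
  fun _i hi => mem_carr.2 fun ρ hρ => mem_carr.1 hi ρ (chromSub_closed hρ h hne)

lemma carr_subset_of_mem_subOf {ℓ m : ℕ} {τ : Finset (ChromV n ℓ)}
    {γ : Finset (ChromV n (ℓ + m))} (hγ : γ ∈ subOf m τ) : carr γ ⊆ carr τ :=
  fun _i hi => mem_carr.2 fun ρ hρ => mem_carr.1 hi ρ (subOf_subset_chromSub hρ hγ)

lemma castV_rfl_eq {a : ℕ} : castV n (rfl : a = a) = (fun v => v) := rfl

lemma castV_succ {p q : ℕ} (h : p + 1 = q + 1) (h' : p = q) (v : ChromV n (p+1)) :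
    castV n h v = ((v.1, v.2.image (castV n h')) : Fin n × Finset (ChromV n q)) := by
  subst h'
  exact Prod.ext rfl (Finset.image_id' (s := v.2)).symm

lemma cast_ids {p q : ℕ} (h : p = q) (γ : Finset (ChromV n p)) :
    ids (γ.image (castV n h)) = ids γ := by
  subst h; rw [castV_rfl_eq, Finset.image_id']

lemma cast_carr {p q : ℕ} (h : p = q) (γ : Finset (ChromV n p)) :
    carr (γ.image (castV n h)) = carr γ := by
  subst h; rw [castV_rfl_eq, Finset.image_id']

lemma cast_card {p q : ℕ} (h : p = q) (γ : Finset (ChromV n p)) :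
    (γ.image (castV n h)).card = γ.card := by
  subst h; rw [castV_rfl_eq, Finset.image_id']

lemma cast_chromSub {p q : ℕ} (h : p = q) (γ : Finset (ChromV n p)) (ρ : Finset (Fin n)) :
    γ.image (castV n h) ∈ chromSub n ρ q ↔ γ ∈ chromSub n ρ p := by
  subst h; rw [castV_rfl_eq, Finset.image_id']

lemma exists_top {α : Type} {col : α → Fin n} {K : Set (Finset α)}
    {s : Finset (Fin n × Finset α)} (hs : s ∈ subdiv col K) :
    ∃ w ∈ s, ∀ v ∈ s, v.2 ⊆ w.2 := by
  obtain ⟨w, hw, hmax⟩ := s.exists_max_image (fun v => v.2.card) hs.1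
  refine ⟨w, hw, fun v hv => ?_⟩
  rcases hs.2.2.2.1 v hv w hw with h | h
  · exact h
  · rw [Finset.eq_of_subset_of_card_le h (hmax v hv)]

end Helpers

/-- designated color in `ids γ` different from `j₀`, if possible. -/
noncomputable def myAS (n : ℕ) (j₀ : Fin n) {ℓ : ℕ} (γ : Finset (ChromV n ℓ)) : Fin n :=
  if h : (ids γ \ {j₀}).Nonempty then h.choose else j₀

/-- the "extra" color of `carr γ \ ids γ`, if any. -/
noncomputable def myE (n : ℕ) (j₀ : Fin n) {ℓ : ℕ} (γ : Finset (ChromV n ℓ)) : Fin n :=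
  if h : (carr γ \ ids γ).Nonempty then h.choose else j₀

lemma myAS_spec {n : ℕ} (j₀ : Fin n) {ℓ : ℕ} {γ : Finset (ChromV n ℓ)}
    (h : (ids γ \ {j₀}).Nonempty) : myAS n j₀ γ ∈ ids γ \ ({j₀} : Finset (Fin n)) := by
  rw [myAS, dif_pos h]; exact h.choose_spec

lemma myE_spec {n : ℕ} (j₀ : Fin n) {ℓ : ℕ} {γ : Finset (ChromV n ℓ)}
    (h : (carr γ \ ids γ).Nonempty) : myE n j₀ γ ∈ carr γ \ ids γ := by
  rw [myE, dif_pos h]; exact h.choose_spec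

/-- The coloring. -/
noncomputable def myC (n : ℕ) (j₀ : Fin n) {ℓ : ℕ} (σL : Finset (ChromV n ℓ))
    (v : ChromV n (ℓ + 1)) : Fin n :=
  if v.2.card ≤ n - 2 then v.1
  else if (carr v.2 \ ids v.2).Nonempty ∧ v.2.card ≤ n - 1 ∧ v.1 = myAS n j₀ v.2 then
    myE n j₀ v.2
  else if v.2 ⊆ σL then j₀ else v.1

lemma singleton_mem_subdiv {n : ℕ} {α : Type} {col : α → Fin n} {K : Set (Finset α)}
    {x : Fin n × Finset α} (h1 : x.2 ∈ K) (h2 : x.1 ∈ x.2.image col) :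
    ({x} : Finset (Fin n × Finset α)) ∈ subdiv col K := by
  refine ⟨⟨x, Finset.mem_singleton_self x⟩, ?_, ?_, ?_, ?_⟩
  · intro v hv; rw [Finset.mem_singleton] at hv; subst hv; exact ⟨h1, h2⟩
  · intro u hu v hv huv
    rw [Finset.mem_singleton] at hu hv; subst hu; subst hv; exact absurd rfl huv
  · intro u hu v hv
    rw [Finset.mem_singleton] at hu hv; subst hu; subst hv; exact Or.inl subset_rfl
  · intro u hu v hv _
    rw [Finset.mem_singleton] at hu hv; subst hu; subst hv; exact subset_rfl

/-- There is no local valency impossibility proof for (n-1)-set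
agreement. Here `R = R₁ + 1 ≥ 2` is the number of rounds of the hypothetical
protocol, and `σs 0, σs 1, …, σs R₁` is the selected sequence of simplexes. -/
theorem no_local_valency_impossibility_proof
    (n R₁ : ℕ) (hn : 3 ≤ n) (hR : 1 ≤ R₁)
    (σs : ∀ ℓ : ℕ, Finset (ChromV n ℓ))
    (h0 : σs 0 = (Finset.univ : Finset (Fin n)))
    (hstep : ∀ ℓ < R₁, σs (ℓ + 1) ∈ subOf 1 (σs ℓ) ∧ (σs (ℓ + 1)).card = n) :
    ∃ c : ChromV n (R₁ + 1) → Fin n,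
      (∀ τ ∈ chromSub n Finset.univ R₁, colorSet c (subOf 1 τ) ⊆ ↑(saVal τ)) ∧
      (∀ τ ∈ chromSub n Finset.univ R₁, colorSet c (subOf 1 τ) = ↑(saVal τ)) ∧
      (∀ ℓ m : ℕ, 1 ≤ ℓ → 1 ≤ m → ∀ h : ℓ + m = R₁ + 1,
        ∀ τ ∈ chromSub n Finset.univ ℓ,
          colorSet (fun v => c (castV n h v)) (subOf m τ) ⊆ ↑(saVal τ)) ∧
      (∀ s ∈ subOf 1 (σs R₁), (s.image c).card < n) := by
  classical
  have hnz : Nonempty (Fin n) := ⟨⟨0, by omega⟩⟩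
  obtain ⟨K, rfl⟩ : ∃ K, R₁ = K + 1 := ⟨R₁ - 1, by omega⟩
  -- membership of the selected simplexes in the full subdivisions
  have hσmem : ∀ ℓ, ℓ ≤ K + 1 → σs ℓ ∈ chromSub n Finset.univ ℓ := by
    intro ℓ
    induction ℓ with
    | zero =>
      intro _
      rw [h0]
      have hne : (Finset.univ : Finset (Fin n)).Nonempty := ⟨⟨0, by omega⟩, Finset.mem_univ _⟩
      exact ⟨hne, subset_rfl⟩
    | succ ℓ ih =>
      intro hle
      exact subOf_subset_chromSub (ih (by omega)) (hstep ℓ (by omega)).1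
  have hσsub : σs (K+1) ∈ subdiv (chromCol n K) (facesOf (σs K)) := (hstep K (by omega)).1
  have hσcard : (σs (K+1)).card = n := (hstep K (by omega)).2
  have hσmemU : σs (K+1) ∈ chromSub n Finset.univ (K+1) := hσmem (K+1) le_rfl
  have hidsσ : ids (σs (K+1)) = Finset.univ := by
    apply Finset.eq_univ_of_card
    rw [card_ids hσmemU, hσcard, Fintype.card_fin]
  -- the top vertex w
  obtain ⟨w, hwσ, hwmax⟩ := exists_top hσsub
  have hwids : ids w.2 = Finset.univ := by
    apply Finset.eq_univ_iff_forall.2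
    intro a
    have ha : a ∈ ids (σs (K+1)) := hidsσ ▸ Finset.mem_univ a
    obtain ⟨v, hv, rfl⟩ := Finset.mem_image.1 ha
    exact ids_mono (hwmax v hv) ((hσsub.2.1 v hv).2)
  -- the color j₀ and the vertex u of σ_L colored j₀
  set j₀ : Fin n := if w.1 = ⟨0, by omega⟩ then ⟨1, by omega⟩ else ⟨0, by omega⟩ with hj₀def
  have hj₀w : j₀ ≠ w.1 := by
    rw [hj₀def]
    split_ifs with h
    · rw [h]; intro hc; exact absurd (Fin.val_eq_of_eq hc) (by simp)
    · intro hc; exact h hc.symm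
  obtain ⟨u, huσ, hu1⟩ : ∃ u ∈ σs (K+1), chromCol n (K+1) u = j₀ := by
    have : j₀ ∈ ids (σs (K+1)) := hidsσ ▸ Finset.mem_univ j₀
    exact Finset.mem_image.1 this
  have hwu : w ≠ u := by
    intro h
    exact hj₀w (by rw [h]; exact hu1.symm)
  have hcarrW : ∀ i : Fin n, i ∈ carr ({w} : Finset (ChromV n (K+1))) := by
    intro i
    rw [mem_carr]
    intro ρ hρ
    have h2 := hρ.2.1 w (Finset.mem_singleton_self w)
    have h3 : ids w.2 ⊆ ρ := ids_subset_of_mem_chromSub h2.1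
    rw [hwids] at h3
    exact h3 (Finset.mem_univ i)
  have hJ0 : ∀ γ : Finset (ChromV n (K+1)), γ ⊆ σs (K+1) → n - 1 ≤ γ.card →
      j₀ ∈ carr γ := by
    intro γ hγsub hγcard
    by_cases hu : u ∈ γ
    · exact ids_subset_carr (Finset.mem_image.2 ⟨u, hu, hu1⟩)
    · have hsub' : γ ⊆ (σs (K+1)).erase u := Finset.subset_erase.2 ⟨hγsub, hu⟩
      have hcard' : ((σs (K+1)).erase u).card = n - 1 := by
        rw [Finset.card_erase_of_mem huσ, hσcard]
      have hγeq : γ = (σs (K+1)).erase u :=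
        Finset.eq_of_subset_of_card_le hsub' (by omega)
      have hwγ : w ∈ γ := by
        rw [hγeq]; exact Finset.mem_erase.2 ⟨hwu, hwσ⟩
      exact carr_mono (Finset.singleton_subset_iff.2 hwγ)
        ⟨w, Finset.mem_singleton_self w⟩ (hcarrW j₀)
  -- key per-vertex lemma
  have hCVAL : ∀ (a : Fin n) (γ : Finset (ChromV n (K+1))),
      γ ∈ chromSub n Finset.univ (K+1) → a ∈ ids γ →
      myC n j₀ (σs (K+1)) (a, γ) ∈ saVal γ := by
    intro a γ hγ ha
    rw [saVal]
    by_cases hsm : γ.card ≤ n - 2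
    · rw [if_pos hsm]
      show myC n j₀ (σs (K+1)) (a, γ) ∈ ids γ
      unfold myC; rw [if_pos hsm]
      exact ha
    · rw [if_neg hsm]
      show myC n j₀ (σs (K+1)) (a, γ) ∈ carr γ
      unfold myC; rw [if_neg hsm]
      split_ifs with hg hsb
      · exact (Finset.mem_sdiff.1 (myE_spec j₀ hg.1)).1
      · exact hJ0 γ hsb (by omega)
      · exact ids_subset_carr ha
  -- monotonicity of saVal
  have hSUBVAL : ∀ (ℓ m : ℕ) (τ : Finset (ChromV n ℓ)) (γ : Finset (ChromV n (ℓ + m))),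
      τ ∈ chromSub n Finset.univ ℓ → γ ∈ iterSub n ℓ m (facesOf τ) →
      saVal γ ⊆ saVal τ := by
    intro ℓ m τ γ hτ hγ
    have hγ' : γ ∈ chromSub n Finset.univ (ℓ + m) := subOf_subset_chromSub hτ hγ
    have hids : ids γ ⊆ ids τ := ids_subset_of_mem_iterSub hγ
    have hcγ := card_ids hγ'
    have hcτ := card_ids hτ
    have hle : γ.card ≤ τ.card := by
      rw [← hcγ, ← hcτ]; exact Finset.card_le_card hids
    rw [saVal, saVal]
    split_ifs with h1 h2 h2
    · exact hids
    · exact hids.trans ids_subset_carr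
    · exact absurd hle (by omega)
    · exact carr_subset_of_mem_subOf hγ
  -- consistency at the last level
  have hCONS : ∀ τ ∈ chromSub n Finset.univ (K+1),
      colorSet (myC n j₀ (σs (K+1))) (subOf 1 τ) ⊆ ↑(saVal τ) := by
    intro τ hτ x hx
    obtain ⟨v, ⟨s, hsL, hvs⟩, rfl⟩ := hx
    have h2 := hsL.2.1 v hvs
    have hγU : v.2 ∈ chromSub n Finset.univ (K+1) := chromSub_closed hτ h2.1.2 h2.1.1
    have hval := hCVAL v.1 v.2 hγU h2.2
    have hsv : saVal v.2 ⊆ saVal τ := hSUBVAL (K+1) 0 τ v.2 hτ h2.1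
    exact Finset.mem_coe.2 (hsv hval)
  -- completeness at the last level
  have hCOMP : ∀ τ ∈ chromSub n Finset.univ (K+1),
      colorSet (myC n j₀ (σs (K+1))) (subOf 1 τ) = ↑(saVal τ) := by
    intro τ hτ
    apply Set.Subset.antisymm (hCONS τ hτ)
    intro i hi
    rw [Finset.mem_coe] at hi
    by_cases hin : i ∈ ids τ
    · -- realized on a singleton face
      obtain ⟨v, hvτ, hvi⟩ := Finset.mem_image.1 hin
      have hface : ({v} : Finset (ChromV n (K+1))) ∈ facesOf τ :=
        ⟨⟨v, Finset.mem_singleton_self v⟩, Finset.singleton_subset_iff.2 hvτ⟩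
      have hidm : i ∈ ({v} : Finset (ChromV n (K+1))).image (chromCol n (K+1)) :=
        Finset.mem_image.2 ⟨v, Finset.mem_singleton_self v, hvi⟩
      refine ⟨(i, {v}), ⟨{(i, ({v} : Finset (ChromV n (K+1))))},
        singleton_mem_subdiv hface hidm, Finset.mem_singleton_self _⟩, ?_⟩
      show myC n j₀ (σs (K+1)) (i, {v}) = i
      unfold myC; rw [if_pos]
      rw [Finset.card_singleton]; omega
    · -- the extra color of an (n-1)-simplex
      have hbig : ¬ τ.card ≤ n - 2 := by
        intro hsm
        rw [saVal, if_pos hsm] at hi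
        exact hin hi
      rw [saVal, if_neg hbig] at hi
      have hcardτ := card_ids hτ
      have hidssub : ids τ ⊆ Finset.univ.erase i :=
        fun a ha => Finset.mem_erase.2 ⟨fun h => hin (h ▸ ha), Finset.mem_univ a⟩
      have hidsle : (ids τ).card ≤ n - 1 := by
        have h1 := Finset.card_le_card hidssub
        rwa [Finset.card_erase_of_mem (Finset.mem_univ i), Finset.card_univ,
          Fintype.card_fin] at h1
      have hτcard : τ.card = n - 1 := by omega
      have hAS : (ids τ \ {j₀}).Nonempty := by
        have h1lt : 1 < (ids τ).card := by omega
        obtain ⟨a, ha, hane⟩ := Finset.exists_mem_ne h1lt j₀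
        exact ⟨a, Finset.mem_sdiff.2 ⟨ha, by simp [hane]⟩⟩
      have hasmem := myAS_spec j₀ hAS
      have hE : (carr τ \ ids τ).Nonempty := ⟨i, Finset.mem_sdiff.2 ⟨hi, hin⟩⟩
      have hτne : τ.Nonempty := Finset.card_pos.1 (by omega)
      have hface : τ ∈ facesOf τ := ⟨hτne, subset_rfl⟩
      have hidm : myAS n j₀ τ ∈ τ.image (chromCol n (K+1)) := (Finset.mem_sdiff.1 hasmem).1
      refine ⟨(myAS n j₀ τ, τ), ⟨{((myAS n j₀ τ : Fin n), τ)},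
        singleton_mem_subdiv hface hidm, Finset.mem_singleton_self _⟩, ?_⟩
      show myC n j₀ (σs (K+1)) (myAS n j₀ τ, τ) = i
      unfold myC; rw [if_neg hbig, if_pos ⟨hE, (by omega : τ.card ≤ n - 1), rfl⟩]
      -- myE n j₀ τ = i since both lie in the singleton univ \ ids τ
      have hEmem := myE_spec j₀ hE
      have h1 : (Finset.univ \ ids τ).card = 1 := by
        rw [Finset.card_sdiff_of_subset (Finset.subset_univ _), Finset.card_univ, Fintype.card_fin,
          hcardτ, hτcard]
        omega
      have hm1 : myE n j₀ τ ∈ Finset.univ \ ids τ :=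
        Finset.mem_sdiff.2 ⟨Finset.mem_univ _, (Finset.mem_sdiff.1 hEmem).2⟩
      have hm2 : i ∈ Finset.univ \ ids τ := Finset.mem_sdiff.2 ⟨Finset.mem_univ _, hin⟩
      exact Finset.card_le_one.1 (le_of_eq h1) _ hm1 _ hm2
  -- condition for intermediate levels
  have hB : ∀ ℓ m : ℕ, 1 ≤ ℓ → 1 ≤ m → ∀ h : ℓ + m = K + 1 + 1,
      ∀ τ ∈ chromSub n Finset.univ ℓ,
        colorSet (fun v => myC n j₀ (σs (K+1)) (castV n h v)) (subOf m τ) ⊆ ↑(saVal τ) := by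
    intro ℓ m hℓ hm h τ hτ
    obtain ⟨m', rfl⟩ : ∃ m', m = m' + 1 := ⟨m - 1, by omega⟩
    intro x hx
    obtain ⟨v, ⟨s, hsL, hvs⟩, rfl⟩ := hx
    have h2 := hsL.2.1 v hvs
    have h' : ℓ + m' = K + 1 := by omega
    show myC n j₀ (σs (K+1)) (castV n h v) ∈ ↑(saVal τ)
    rw [castV_succ h h' v]
    have hv2U : v.2 ∈ chromSub n Finset.univ (ℓ + m') := subOf_subset_chromSub hτ h2.1
    have hγ'U : v.2.image (castV n h') ∈ chromSub n Finset.univ (K+1) :=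
      (cast_chromSub h' v.2 _).2 hv2U
    have ha : v.1 ∈ ids (v.2.image (castV n h')) := by
      rw [cast_ids h' v.2]; exact h2.2
    have hval := hCVAL v.1 (v.2.image (castV n h')) hγ'U ha
    have heq : saVal (v.2.image (castV n h')) = saVal v.2 := by
      rw [saVal, saVal, cast_ids h' v.2, cast_carr h' v.2, cast_card h' v.2]
    rw [heq] at hval
    exact Finset.mem_coe.2 (hSUBVAL ℓ m' τ v.2 hτ h2.1 hval)
  -- no rainbow simplex in χ(σ_L)
  have hC : ∀ s ∈ subOf 1 (σs (K+1)), (s.image (myC n j₀ (σs (K+1)))).card < n := by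
    intro s hs
    by_contra hge
    push_neg at hge
    have hcol : ∀ x ∈ s, ∀ y ∈ s, x ≠ y → x.1 ≠ y.1 := hs.2.2.1
    have hcolcard : (s.image (fun v => v.1)).card = s.card :=
      Finset.card_image_of_injOn (fun x hx y hy hxy => by
        by_contra hne
        exact hcol x (Finset.mem_coe.1 hx) y (Finset.mem_coe.1 hy) hne hxy)
    have hcards : s.card ≤ n := by
      have h2 := Finset.card_le_univ (s.image (fun v : ChromV n (K+1+1) => v.1))
      rw [Fintype.card_fin, hcolcard] at h2
      exact h2
    have himgle : (s.image (myC n j₀ (σs (K+1)))).card ≤ s.card := Finset.card_image_le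
    have hceq : (s.image (myC n j₀ (σs (K+1)))).card = n :=
      le_antisymm (le_trans himgle hcards) hge
    have hscardn : s.card = n := by omega
    have hcInj : Set.InjOn (myC n j₀ (σs (K+1))) ↑s :=
      Finset.card_image_iff.1 (by rw [hceq, hscardn])
    have himgc : s.image (myC n j₀ (σs (K+1))) = Finset.univ :=
      Finset.eq_univ_of_card _ (by rw [hceq, Fintype.card_fin])
    have himgcol : ∀ a : Fin n, ∃ v ∈ s, v.1 = a := by
      intro a
      have h1 : (s.image (fun v => v.1)) = Finset.univ :=
        Finset.eq_univ_of_card _ (by rw [hcolcard, hscardn, Fintype.card_fin])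
      obtain ⟨v, hv, hva⟩ := Finset.mem_image.1 (h1 ▸ Finset.mem_univ a)
      exact ⟨v, hv, hva⟩
    -- the top vertex of s sits over the whole of σ_L
    obtain ⟨vt, hvts, hvtmax⟩ := exists_top hs
    have hvtface : vt.2 ⊆ σs (K+1) := (hs.2.1 vt hvts).1.2
    have hvt2 : vt.2 = σs (K+1) := by
      have hidsall : ∀ a : Fin n, a ∈ ids vt.2 := by
        intro a
        obtain ⟨v, hv, hva⟩ := himgcol a
        exact ids_mono (hvtmax v hv) (hva ▸ (hs.2.1 v hv).2)
      have h3 : (ids vt.2).card ≤ vt.2.card := Finset.card_image_le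
      have h4 : ids vt.2 = Finset.univ := Finset.eq_univ_iff_forall.2 hidsall
      rw [h4, Finset.card_univ, Fintype.card_fin] at h3
      exact Finset.eq_of_subset_of_card_le hvtface (by omega)
    have hvt2card : vt.2.card = n := by rw [hvt2, hσcard]
    have hvtval : myC n j₀ (σs (K+1)) vt = j₀ := by
      unfold myC; rw [if_neg (show ¬ vt.2.card ≤ n - 2 by omega),
        if_neg (show ¬((carr vt.2 \ ids vt.2).Nonempty ∧ vt.2.card ≤ n - 1 ∧
          vt.1 = myAS n j₀ vt.2) by rintro ⟨-, hc, -⟩; omega),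
        if_pos (show vt.2 ⊆ σs (K+1) by rw [hvt2])]
    -- the second-from-top vertex
    have htne : (s.erase vt).Nonempty := by
      apply Finset.card_pos.1
      erw [Finset.card_erase_of_mem hvts, hscardn]; omega
    have htsub : s.erase vt ∈ subdiv (chromCol n (K+1)) (facesOf (σs (K+1))) :=
      mem_subdiv_closed hs (Finset.erase_subset _ _) htne
    obtain ⟨v₂, hv₂t, hv₂max⟩ := exists_top htsub
    have hv₂s : v₂ ∈ s := Finset.mem_of_mem_erase hv₂t
    have hv₂ne : v₂ ≠ vt := Finset.ne_of_mem_erase hv₂t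
    have hγ₂sub : v₂.2 ⊆ σs (K+1) := (hs.2.1 v₂ hv₂s).1.2
    have hidsγ₂ : Finset.univ.erase vt.1 ⊆ ids v₂.2 := by
      intro a ha
      obtain ⟨hane, -⟩ := Finset.mem_erase.1 ha
      obtain ⟨v, hv, hva⟩ := himgcol a
      have hvne : v ≠ vt := fun h => hane (by rw [← hva, h])
      exact ids_mono (hv₂max v (Finset.mem_erase.2 ⟨hvne, hv⟩)) (hva ▸ (hs.2.1 v hv).2)
    have hγ₂cardlb : n - 1 ≤ v₂.2.card := by
      have h1 := Finset.card_le_card hidsγ₂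
      have h2 : (ids v₂.2).card ≤ v₂.2.card := Finset.card_image_le
      rw [Finset.card_erase_of_mem (Finset.mem_univ _), Finset.card_univ,
        Fintype.card_fin] at h1
      omega
    have hcv₂ne : myC n j₀ (σs (K+1)) v₂ ≠ j₀ := by
      intro h
      exact hv₂ne (hcInj (Finset.mem_coe.2 hv₂s) (Finset.mem_coe.2 hvts)
        (h.trans hvtval.symm))
    have hγ₂card : v₂.2.card = n - 1 := by
      by_contra hnecard
      have h2 : v₂.2.card ≤ n := by
        have := Finset.card_le_card hγ₂sub
        omega
      have h3 : v₂.2.card = n := by omega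
      apply hcv₂ne
      unfold myC; rw [if_neg (show ¬ v₂.2.card ≤ n - 2 by omega),
        if_neg (show ¬((carr v₂.2 \ ids v₂.2).Nonempty ∧ v₂.2.card ≤ n - 1 ∧
          v₂.1 = myAS n j₀ v₂.2) by rintro ⟨-, hc, -⟩; omega),
        if_pos hγ₂sub]
    have hidseq : ids v₂.2 = Finset.univ.erase vt.1 := by
      refine (Finset.eq_of_subset_of_card_le hidsγ₂ ?_).symm
      have h2 : (ids v₂.2).card ≤ v₂.2.card := Finset.card_image_le
      rw [Finset.card_erase_of_mem (Finset.mem_univ _), Finset.card_univ, Fintype.card_fin]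
      omega
    have hguard : (carr v₂.2 \ ids v₂.2).Nonempty ∧ v₂.2.card ≤ n - 1 ∧
        v₂.1 = myAS n j₀ v₂.2 := by
      by_contra hng
      apply hcv₂ne
      unfold myC; rw [if_neg (show ¬ v₂.2.card ≤ n - 2 by omega), if_neg hng, if_pos hγ₂sub]
    have hv₂val : myC n j₀ (σs (K+1)) v₂ = myE n j₀ v₂.2 := by
      unfold myC; rw [if_neg (show ¬ v₂.2.card ≤ n - 2 by omega), if_pos hguard]
    have hEmem := myE_spec j₀ hguard.1
    have hEi : myE n j₀ v₂.2 = vt.1 := by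
      have h1 : myE n j₀ v₂.2 ∉ ids v₂.2 := (Finset.mem_sdiff.1 hEmem).2
      rw [hidseq] at h1
      by_contra hne
      exact h1 (Finset.mem_erase.2 ⟨hne, Finset.mem_univ _⟩)
    have hASne : (ids v₂.2 \ {j₀}).Nonempty := by
      have h1lt : 1 < (ids v₂.2).card := by
        rw [hidseq, Finset.card_erase_of_mem (Finset.mem_univ _), Finset.card_univ,
          Fintype.card_fin]
        omega
      obtain ⟨a, ha, hane⟩ := Finset.exists_mem_ne h1lt j₀
      exact ⟨a, Finset.mem_sdiff.2 ⟨ha, by simp [hane]⟩⟩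
    have hASmem := myAS_spec j₀ hASne
    have ha₁ids : myAS n j₀ v₂.2 ∈ ids v₂.2 := (Finset.mem_sdiff.1 hASmem).1
    have ha₁j₀ : myAS n j₀ v₂.2 ≠ j₀ := by
      have h1 := (Finset.mem_sdiff.1 hASmem).2
      simpa using h1
    have ha₁i : myAS n j₀ v₂.2 ≠ vt.1 := by
      rw [hidseq] at ha₁ids
      exact (Finset.mem_erase.1 ha₁ids).1
    -- the vertex of s colored by the designated color of γ₂
    obtain ⟨v₃, hv₃s, hv₃c⟩ := Finset.mem_image.1 (himgc ▸ Finset.mem_univ (myAS n j₀ v₂.2))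
    have hv₃ne_t : v₃ ≠ vt := fun h => ha₁j₀ (by rw [← hv₃c, h, hvtval])
    have hv₃ne_2 : v₃ ≠ v₂ := fun h => ha₁i (by rw [← hv₃c, h, hv₂val, hEi])
    have hv₃sub : v₃.2 ⊆ v₂.2 := hv₂max v₃ (Finset.mem_erase.2 ⟨hv₃ne_t, hv₃s⟩)
    have hv₃neq : v₃.2 ≠ v₂.2 := by
      intro heq
      have hval3 : myC n j₀ (σs (K+1)) v₃ = myE n j₀ v₂.2 ∨
          myC n j₀ (σs (K+1)) v₃ = j₀ := by
        rw [myC, if_neg (show ¬ v₃.2.card ≤ n - 2 by rw [heq]; omega)]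
        by_cases hg : (carr v₃.2 \ ids v₃.2).Nonempty ∧ v₃.2.card ≤ n - 1 ∧
            v₃.1 = myAS n j₀ v₃.2
        · rw [if_pos hg, heq]; exact Or.inl rfl
        · rw [if_neg hg, if_pos (show v₃.2 ⊆ σs (K+1) by rw [heq]; exact hγ₂sub)]
          exact Or.inr rfl
      rcases hval3 with h | h
      · exact ha₁i (by rw [← hv₃c, h, hEi])
      · exact ha₁j₀ (by rw [← hv₃c, h])
    have hv₃card : v₃.2.card ≤ n - 2 := by
      have h1 := Finset.card_lt_card (Finset.ssubset_iff_subset_ne.2 ⟨hv₃sub, hv₃neq⟩)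
      omega
    have hval3 : myC n j₀ (σs (K+1)) v₃ = v₃.1 := by rw [myC, if_pos hv₃card]
    have hfin : v₃.1 = v₂.1 := by rw [← hval3, hv₃c, hguard.2.2]
    exact hcol v₃ hv₃s v₂ hv₂s hv₃ne_2 hfin
  exact ⟨myC n j₀ (σs (K+1)), hCONS, hCOMP, hB, hC⟩
end
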